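/- Intertwining relation: for 0 < t < 1/2, the operator (I_t v)(ξ) = ∫ v(η) d_{o,ε}(ξ,η)^{−(1−2t)D} dν_o(η) satisfies I_t ∘ π_t(γ) = π_{−t}(γ) ∘ I_t for all γ ∈ Γ and all v ∈ L^p(∂X, ν_o) with 1/p = 1/2 + t, provided the visual metrics satisfy the conformal relation d_{γo,ε}(ξ,η) = e^{(ε/2)(β_ξ(o,γo)+β_η(o,γo))} d_{o,ε}(ξ,η) and the Radon–Nikodym derivative of γ_*ν_o is e^{Q β_ξ(o,γo)}. -/

import Mathlib

open MeasureTheory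

/-- **The intertwining relation `I_t π_t(γ) = π_{−t}(γ) I_t`.** For `0 < t < 1/2`, the
operator `(I_t v)(ξ) = ∫ v(η) d_{o,ε}(ξ,η)^{−(1−2t)D} dν(η)` intertwines `π_t` and
`π_{−t}`, provided the visual metrics satisfy the conformal relation
`d_{o,ε}(γ⁻¹ξ, γ⁻¹η) = e^{(ε/2)(β_ξ(o,γo)+β_η(o,γo))} d_{o,ε}(ξ,η)` and
`dγ_*ν/dν(ξ) = e^{Q β_ξ(o,γo)}`, with `D = Q/ε`. -/
theorem stmt_11 {Γ Ω : Type*} [Group Γ] [MulAction Γ Ω] [MeasurableSpace Ω]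
    (ν : Measure Ω) [IsProbabilityMeasure ν]
    (hsmul : ∀ γ : Γ, Measurable fun ξ : Ω => γ • ξ)
    (Q ε D t p : ℝ) (hQ : 0 < Q) (hε : 0 < ε) (hD : D = Q / ε)
    (ht : 0 < t) (ht' : t < 1 / 2) (hp : 1 / p = 1 / 2 + t)
    (β : Γ → Ω → ℝ) (hβmeas : ∀ γ : Γ, Measurable (β γ))
    (hcoc : ∀ (γ₁ γ₂ : Γ) (ξ : Ω), β (γ₁ * γ₂) ξ = β γ₁ ξ + β γ₂ (γ₁⁻¹ • ξ))
    (hRN : ∀ γ : Γ, Measure.map (fun ξ : Ω => γ • ξ) ν =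
      ν.withDensity fun ξ => ENNReal.ofReal (Real.exp (Q * β γ ξ)))
    -- the visual metric `d_{o,ε}` on the boundary and the conformal relation
    (dvo : Ω → Ω → ℝ) (hdmeas : Measurable (Function.uncurry dvo))
    (hdnonneg : ∀ ξ η : Ω, 0 ≤ dvo ξ η)
    (hconf : ∀ (γ : Γ) (ξ η : Ω),
      dvo (γ⁻¹ • ξ) (γ⁻¹ • η) = Real.exp (ε / 2 * (β γ ξ + β γ η)) * dvo ξ η) :
    -- `I_t (π_t(γ) v) = π_{−t}(γ) (I_t v)`
    ∀ (γ : Γ) (v : Ω → ℝ), Measurable v → MemLp v (ENNReal.ofReal p) ν →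
      ∀ ξ : Ω,
        ∫ η, (Real.exp ((1 / 2 + t) * Q * β γ η) * v (γ⁻¹ • η)) *
            dvo ξ η ^ (-((1 - 2 * t) * D)) ∂ν
          = Real.exp ((1 / 2 - t) * Q * β γ ξ) *
            ∫ η, v η * dvo (γ⁻¹ • ξ) η ^ (-((1 - 2 * t) * D)) ∂ν := by
  intro γ v hv _ ξ
  -- β of identity is 0
  have hβ1 : ∀ η : Ω, β 1 η = 0 := by
    intro η
    have h := hcoc 1 1 η
    simp at h
    linarith [h]
  -- inversion formula for the cocycle
  have hβinv : ∀ η : Ω, β γ⁻¹ η = - β γ (γ • η) := by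
    intro η
    have h := hcoc γ γ⁻¹ (γ • η)
    rw [mul_inv_cancel, hβ1, inv_smul_smul] at h
    linarith
  set s : ℝ := (1 - 2 * t) * D with hs
  set f : Ω → ℝ := fun η =>
    (Real.exp ((1 / 2 + t) * Q * β γ η) * v (γ⁻¹ • η)) * dvo ξ η ^ (-s) with hf
  have hdξ : ∀ ζ : Ω, Measurable (fun η => dvo ζ η) := fun ζ =>
    hdmeas.comp (measurable_prodMk_left)
  have hfmeas : Measurable f := by
    apply Measurable.mul
    · exact (((hβmeas γ).const_mul _).exp).mul (hv.comp (hsmul γ⁻¹))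
    · exact (hdξ ξ).pow_const _
  -- change of variables η ↦ γ • η
  have hmap := hRN γ⁻¹
  have hcv : ∫ η, f η ∂ν = ∫ η, Real.exp (Q * β γ⁻¹ η) * f (γ • η) ∂ν := by
    have h1 : ∫ η, f (γ • η) ∂(Measure.map (fun x : Ω => γ⁻¹ • x) ν)
        = ∫ η, f η ∂ν := by
      rw [integral_map (f := fun η => f (γ • η)) (hsmul γ⁻¹).aemeasurable
        ((hfmeas.comp (hsmul γ)).aestronglyMeasurable)]
      simp [smul_smul]
    have h2 : (fun η : Ω => ENNReal.ofReal (Real.exp (Q * β γ⁻¹ η)))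
        = fun η : Ω => ((Real.toNNReal (Real.exp (Q * β γ⁻¹ η)) : NNReal) : ENNReal) := rfl
    rw [← h1, hmap, h2,
      integral_withDensity_eq_integral_smul
        (((hβmeas γ⁻¹).const_mul _).exp.real_toNNReal) (fun η => f (γ • η))]
    refine integral_congr_ae (Filter.Eventually.of_forall fun η => ?_)
    simp [NNReal.smul_def, Real.coe_toNNReal _ (Real.exp_pos _).le]
  rw [hcv]
  -- pointwise identification of the integrands
  rw [← integral_const_mul]
  refine integral_congr_ae (Filter.Eventually.of_forall fun η => ?_)
  set a : ℝ := β γ ξ with ha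
  set b : ℝ := β γ (γ • η) with hb
  have hconf' := hconf γ ξ (γ • η)
  rw [inv_smul_smul] at hconf'
  have hd : dvo ξ (γ • η) = Real.exp (-(ε / 2 * (a + b))) * dvo (γ⁻¹ • ξ) η := by
    rw [hconf', ← mul_assoc, ← Real.exp_add]
    simp [ha, hb]
  have hrpow : dvo ξ (γ • η) ^ (-s)
      = Real.exp (ε / 2 * (a + b) * s) * dvo (γ⁻¹ • ξ) η ^ (-s) := by
    rw [hd, Real.mul_rpow (Real.exp_pos _).le (hdnonneg _ _), ← Real.exp_mul]
    ring_nf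
  have hse : ε / 2 * (a + b) * s = (1 / 2 - t) * Q * (a + b) := by
    rw [hs, hD]
    field_simp
  simp only [hf, inv_smul_smul, hβinv, hrpow, hse, ← hb]
  rw [mul_comm (Real.exp (Q * (-b)))]
  have hexp : Real.exp ((1 / 2 + t) * Q * b) * Real.exp ((1 / 2 - t) * Q * (a + b))
      * Real.exp (Q * (-b)) = Real.exp ((1 / 2 - t) * Q * a) := by
    rw [← Real.exp_add, ← Real.exp_add]
    ring_nf
  calc Real.exp ((1 / 2 + t) * Q * b) * v η
        * (Real.exp ((1 / 2 - t) * Q * (a + b)) * dvo (γ⁻¹ • ξ) η ^ (-s))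
        * Real.exp (Q * (-b))
      = (Real.exp ((1 / 2 + t) * Q * b) * Real.exp ((1 / 2 - t) * Q * (a + b))
          * Real.exp (Q * (-b))) * (v η * dvo (γ⁻¹ • ξ) η ^ (-s)) := by ring
    _ = Real.exp ((1 / 2 - t) * Q * a) * (v η * dvo (γ⁻¹ • ξ) η ^ (-s)) := by rw [hexp]
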